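/- If P(z) is a polynomial of degree n, then |P'(z)| ≤ n·|z|^{n−1} · max_{|w|=1} |P(w)| for all z with |z| ≥ 1. -/

import Mathlib

open Polynomial Filter

/-- The maximum of `|P(w)|` over the unit circle `|w| = 1`. -/
noncomputable def maxMod (P : Polynomial ℂ) : ℝ :=
  sSup ((fun w => ‖P.eval w‖) '' {w : ℂ | ‖w‖ = 1})

lemma circle_set_eq : {w : ℂ | ‖w‖ = 1} = Metric.sphere (0:ℂ) 1 := by
  ext u; simp [Complex.dist_eq]

lemma circle_bound (P : Polynomial ℂ) {w : ℂ} (hw : ‖w‖ = 1) :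
    ‖P.eval w‖ ≤ maxMod P := by
  apply le_csSup
  · have hcomp : IsCompact ((fun w => ‖P.eval w‖) '' {w : ℂ | ‖w‖ = 1}) := by
      rw [circle_set_eq]
      exact (isCompact_sphere (0:ℂ) 1).image (continuous_norm.comp P.continuous)
    exact hcomp.bddAbove
  · exact ⟨w, hw, rfl⟩

lemma ball_bound_gen (Q : Polynomial ℂ) (C : ℝ)
    (hC : ∀ w : ℂ, ‖w‖ = 1 → ‖Q.eval w‖ ≤ C) :
    ∀ w : ℂ, ‖w‖ ≤ 1 → ‖Q.eval w‖ ≤ C := by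
  intro w hw
  have := Complex.norm_le_of_forall_mem_frontier_norm_le (U := Metric.ball (0:ℂ) 1)
    Metric.isBounded_ball (Q.differentiable.diffContOnCl)
    (C := C) (fun z hz => ?_) (z := w) ?_
  · simpa using this
  · rw [frontier_ball (0:ℂ) one_ne_zero] at hz
    simp only [Metric.mem_sphere, Complex.dist_eq, sub_zero] at hz
    simpa using hC z hz
  · rw [closure_ball (0:ℂ) one_ne_zero]
    simpa [Complex.dist_eq] using hw

lemma ball_bound (P : Polynomial ℂ) {w : ℂ} (hw : ‖w‖ ≤ 1) :
    ‖P.eval w‖ ≤ maxMod P :=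
  ball_bound_gen P (maxMod P) (fun _ h => circle_bound P h) w hw

lemma reflect_eval (P : Polynomial ℂ) (n : ℕ) (hdeg : P.natDegree ≤ n) {u : ℂ} (hu : u ≠ 0) :
    (P.reflect n).eval u⁻¹ * u ^ n = P.eval u := by
  haveI := invertibleOfNonzero hu
  have h := eval₂_reflect_mul_pow (RingHom.id ℂ) u n P hdeg
  rw [invOf_eq_inv] at h
  simpa only [eval₂_id] using h

lemma reflect_ball_bound (P : Polynomial ℂ) (n : ℕ) (hdeg : P.natDegree ≤ n) :
    ∀ w : ℂ, ‖w‖ ≤ 1 → ‖(P.reflect n).eval w‖ ≤ maxMod P := by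
  apply ball_bound_gen
  intro w hw
  have hw0 : w ≠ 0 := by
    intro h; rw [h] at hw; simp at hw
  have hkey := reflect_eval P n hdeg (u := w⁻¹) (inv_ne_zero hw0)
  rw [inv_inv] at hkey
  have habs : ‖(P.reflect n).eval w‖ * ‖w⁻¹‖ ^ n
      = ‖P.eval w⁻¹‖ := by
    rw [← hkey]; simp [norm_mul, norm_pow]
  have hwinv : ‖w⁻¹‖ = 1 := by simp [hw]
  rw [hwinv] at habs
  simp only [one_pow, mul_one] at habs
  rw [habs]
  exact circle_bound P (by simp [hw])

lemma growth_bound (P : Polynomial ℂ) (n : ℕ) (hdeg : P.natDegree ≤ n) :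
    ∀ u : ℂ, 1 ≤ ‖u‖ → ‖P.eval u‖ ≤ maxMod P * ‖u‖ ^ n := by
  intro u hu
  have hu0 : u ≠ 0 := by
    intro h; rw [h, norm_zero] at hu; linarith
  have hkey := reflect_eval P n hdeg hu0
  rw [← hkey, norm_mul, norm_pow]
  have h1 : ‖(P.reflect n).eval u⁻¹‖ ≤ maxMod P := by
    apply reflect_ball_bound P n hdeg
    rw [norm_inv]
    exact inv_le_one_of_one_le₀ hu
  exact mul_le_mul_of_nonneg_right h1 (by positivity)

lemma leadingCoeff_bound (P : Polynomial ℂ) (n : ℕ) (hdeg : P.natDegree = n) :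
    ‖P.coeff n‖ ≤ maxMod P := by
  have h0 : (P.reflect n).eval 0 = P.coeff n := by
    rw [← coeff_zero_eq_eval_zero, coeff_reflect, revAt_le (Nat.zero_le n)]
    simp
  rw [← h0]
  exact reflect_ball_bound P n hdeg.le 0 (by simp)

lemma maxMod_nonneg (P : Polynomial ℂ) : 0 ≤ maxMod P := by
  have := circle_bound P (w := 1) (by simp)
  exact le_trans (by positivity) this

lemma maxMod_pos (P : Polynomial ℂ) (n : ℕ) (hn : 1 ≤ n) (hdeg : P.natDegree = n) :
    0 < maxMod P := by
  rcases lt_or_eq_of_le (maxMod_nonneg P) with h | h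
  · exact h
  · exfalso
    have hP0 : P ≠ 0 := by
      intro h0; rw [h0, natDegree_zero] at hdeg; omega
    have hlc : P.coeff n ≠ 0 := by
      rw [← hdeg]
      exact fun h0 => hP0 (leadingCoeff_eq_zero.mp h0)
    have := leadingCoeff_bound P n hdeg
    rw [← h] at this
    exact hlc (by simpa using le_antisymm this (by positivity))

/-- Gauss-Lucas type statement for the closed unit disk. -/
lemma gauss_lucas_disk (S : Polynomial ℂ) (hd : 1 ≤ S.natDegree)
    (h : ∀ w : ℂ, 1 ≤ ‖w‖ → S.eval w ≠ 0) :
    ∀ z : ℂ, 1 < ‖z‖ → (Polynomial.derivative S).eval z ≠ 0 := by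
  classical
  intro z hz
  have hS0 : S ≠ 0 := fun h0 => by simp [h0] at hd
  have hcard : Multiset.card S.roots = S.natDegree :=
    (splits_iff_card_roots).mp (IsAlgClosed.splits S)
  have hfac : C S.leadingCoeff * (S.roots.map fun a => X - C a).prod = S :=
    C_leadingCoeff_mul_prod_multiset_X_sub_C hcard
  have hr : ∀ r ∈ S.roots, ‖r‖ < 1 := by
    intro r hrm
    by_contra hcon
    push_neg at hcon
    exact h r hcon ((mem_roots hS0).mp hrm)
  have hzr : ∀ r ∈ S.roots, z - r ≠ 0 := by
    intro r hrm
    have := hr r hrm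
    intro he
    rw [sub_eq_zero] at he
    subst he
    exact absurd hz (by linarith)
  -- key evaluation formula
  have hder : (Polynomial.derivative S).eval z
      = S.eval z * (S.roots.map fun a => (z - a)⁻¹).sum := by
    conv_lhs => rw [← hfac]
    rw [derivative_C_mul, eval_C_mul, derivative_prod]
    rw [show ((S.roots.map fun i =>
        ((S.roots.erase i).map fun a => X - C a).prod * Polynomial.derivative (X - C i)).sum)
      = ((S.roots.map fun i => ((S.roots.erase i).map fun a => X - C a).prod).sum) by
        congr 1; apply Multiset.map_congr rfl; intro x _; rw [derivative_X_sub_C, mul_one]]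
    rw [← coe_evalRingHom, map_multiset_sum (evalRingHom z), Multiset.map_map]
    have hterm : ∀ i ∈ S.roots,
        ((evalRingHom z) ∘ fun i => ((S.roots.erase i).map fun a => X - C a).prod) i
        = ((S.roots.map fun a => (z - a)).prod) * (z - i)⁻¹ := by
      intro i hi
      simp only [Function.comp_apply]
      rw [map_multiset_prod, Multiset.map_map]
      have hcons : (S.roots.map fun a => (z - a)).prod
          = (z - i) * ((S.roots.erase i).map fun a => (z - a)).prod := by
        conv_lhs => rw [← Multiset.cons_erase hi]
        rw [Multiset.map_cons, Multiset.prod_cons]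
      rw [hcons, mul_comm (z - i), mul_assoc, mul_inv_cancel₀ (hzr i hi), mul_one]
      congr 1
      apply Multiset.map_congr rfl
      intro x _
      simp [evalRingHom]
    rw [Multiset.map_congr rfl hterm, Multiset.sum_map_mul_left]
    have hevalS : (evalRingHom z) S = S.leadingCoeff * (S.roots.map fun a => (z - a)).prod := by
      conv_lhs => rw [← hfac]
      rw [map_mul, map_multiset_prod, Multiset.map_map]
      congr 1
      · simp
      · exact congrArg Multiset.prod (Multiset.map_congr rfl fun x _ => by simp [evalRingHom])
    rw [hevalS]
    ring
  have hSz : S.eval z ≠ 0 := h z hz.le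
  rw [hder]
  -- pointwise positivity
  have hposre : ∀ a : ℂ, ‖a‖ < 1 → 0 < (z * (z - a)⁻¹).re := by
    intro a ha
    have hza : z - a ≠ 0 := by
      intro he; rw [sub_eq_zero] at he; subst he; linarith
    have hns : 0 < Complex.normSq (z - a) := Complex.normSq_pos.mpr hza
    have h1 : ‖z‖ * (‖z‖ - ‖a‖)
        ≤ (z * (starRingEnd ℂ) (z - a)).re := by
      have hexp : z * (starRingEnd ℂ) (z - a)
          = ((Complex.normSq z : ℝ) : ℂ) - z * (starRingEnd ℂ) a := by
        rw [map_sub, mul_sub, Complex.mul_conj]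
      rw [hexp, Complex.sub_re, Complex.ofReal_re]
      have h2 : (z * (starRingEnd ℂ) a).re ≤ ‖z‖ * ‖a‖ := by
        calc (z * (starRingEnd ℂ) a).re ≤ ‖z * (starRingEnd ℂ) a‖ :=
              Complex.re_le_norm _
          _ = ‖z‖ * ‖a‖ := by rw [norm_mul, Complex.norm_conj]
      have h3 : Complex.normSq z = ‖z‖ ^ 2 := (Complex.sq_norm z).symm
      nlinarith
    have h4 : z * (z - a)⁻¹
        = (z * (starRingEnd ℂ) (z - a)) * ((((Complex.normSq (z - a))⁻¹ : ℝ)) : ℂ) := by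
      rw [Complex.inv_def]; ring
    rw [h4]
    have h5 : ((z * (starRingEnd ℂ) (z - a)) * ((((Complex.normSq (z - a))⁻¹ : ℝ)) : ℂ)).re
        = (z * (starRingEnd ℂ) (z - a)).re * (Complex.normSq (z - a))⁻¹ := by
      simp [Complex.mul_re]
    rw [h5]
    have h6 : 0 < ‖z‖ * (‖z‖ - ‖a‖) := by nlinarith
    exact mul_pos (lt_of_lt_of_le h6 h1) (inv_pos.mpr hns)
  -- the sum is nonzero
  have hsum : (S.roots.map fun a => (z - a)⁻¹).sum ≠ 0 := by
    intro h0
    have hre : 0 < (z * (S.roots.map fun a => (z - a)⁻¹).sum).re := by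
      rw [← Multiset.sum_map_mul_left, ← Complex.coe_reAddGroupHom,
        map_multiset_sum, Multiset.map_map]
      set m := S.roots.map (⇑Complex.reAddGroupHom ∘ fun a => z * (z - a)⁻¹) with hm
      have hall : ∀ x ∈ m, 0 < x := by
        intro x hx
        rw [hm] at hx
        obtain ⟨a, ha, rfl⟩ := Multiset.mem_map.mp hx
        exact hposre a (hr a ha)
      have hne : m ≠ 0 := by
        rw [hm]
        simp only [Ne, Multiset.map_eq_zero]
        intro h'
        rw [h'] at hcard
        simp at hcard
        omega
      obtain ⟨x, hx⟩ := Multiset.exists_mem_of_ne_zero hne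
      calc (0:ℝ) < x := hall x hx
        _ ≤ m.sum := Multiset.single_le_sum (fun y hy => (hall y hy).le) x hx
    rw [h0, mul_zero] at hre
    simp at hre
  exact mul_ne_zero hSz hsum

lemma main_strict (P : Polynomial ℂ) (n : ℕ) (hn : 1 ≤ n) (hdeg : P.natDegree = n) :
    ∀ z : ℂ, 1 < ‖z‖ →
      ‖(Polynomial.derivative P).eval z‖
        ≤ (n : ℝ) * ‖z‖ ^ (n - 1) * maxMod P := by
  intro z hz
  by_contra hcon
  push_neg at hcon
  have hM0 : 0 < maxMod P := maxMod_pos P n hn hdeg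
  have hz0 : z ≠ 0 := by
    intro h; rw [h, norm_zero] at hz; linarith
  set d : ℂ := (n : ℂ) * z ^ (n - 1) * (maxMod P : ℂ) with hd
  have habsd : ‖d‖ = (n : ℝ) * ‖z‖ ^ (n - 1) * maxMod P := by
    rw [hd]
    simp [norm_mul, norm_pow, Complex.norm_natCast, Complex.norm_real,
      Real.norm_eq_abs, abs_of_pos hM0]
  have hd0 : d ≠ 0 := by
    intro h0
    rw [h0, norm_zero] at habsd
    have : (0:ℝ) < (n : ℝ) * ‖z‖ ^ (n - 1) * maxMod P := by positivity
    linarith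
  set lam : ℂ := (Polynomial.derivative P).eval z / d with hlam
  have hlamabs : 1 < ‖lam‖ := by
    rw [hlam, norm_div, habsd]
    rw [lt_div_iff₀ (by positivity), one_mul]
    exact hcon
  set R : Polynomial ℂ := C (lam * (maxMod P : ℂ)) * X ^ n - P with hR
  have hRroot : ∀ w : ℂ, 1 ≤ ‖w‖ → R.eval w ≠ 0 := by
    intro w hw h0
    rw [hR] at h0
    simp only [eval_sub, eval_mul, eval_C, eval_pow, eval_X, sub_eq_zero] at h0
    have h2 : ‖lam * (maxMod P : ℂ) * w ^ n‖
        = ‖lam‖ * maxMod P * ‖w‖ ^ n := by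
      simp [norm_mul, norm_pow, Complex.norm_real, Real.norm_eq_abs, abs_of_pos hM0]
    have h3 := growth_bound P n hdeg.le w hw
    rw [← h0] at h3
    rw [h2] at h3
    have hwn : (0:ℝ) < ‖w‖ ^ n := by positivity
    nlinarith [mul_pos hM0 hwn, mul_pos (mul_pos (sub_pos.mpr hlamabs) hM0) hwn]
  have hRdeg : 1 ≤ R.natDegree := by
    have hcoeff : R.coeff n = lam * (maxMod P : ℂ) - P.coeff n := by
      rw [hR, coeff_sub, coeff_C_mul, coeff_X_pow]
      simp
    have hne : R.coeff n ≠ 0 := by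
      rw [hcoeff, sub_ne_zero]
      intro heq
      have h1 : ‖lam * (maxMod P : ℂ)‖ = ‖P.coeff n‖ := by rw [heq]
      rw [norm_mul, Complex.norm_real, Real.norm_eq_abs, abs_of_pos hM0] at h1
      have h2 := leadingCoeff_bound P n hdeg
      nlinarith
    have := le_natDegree_of_ne_zero hne
    omega
  apply gauss_lucas_disk R hRdeg hRroot z hz
  have hderR : (Polynomial.derivative R).eval z
      = lam * (maxMod P : ℂ) * ((n : ℂ) * z ^ (n - 1)) - (Polynomial.derivative P).eval z := by
    rw [hR, derivative_sub, derivative_C_mul, derivative_X_pow]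
    simp only [eval_sub, eval_mul, eval_C, eval_pow, eval_X, eval_natCast]
  rw [hderR, sub_eq_zero, hlam]
  field_simp
  rw [hd]
  ring

/-- `|P'(z)| ≤ n |z|^(n-1) max_(|w|=1)|P(w)|` for `|z| ≥ 1`. -/
theorem deriv_bound_outside (P : Polynomial ℂ) (n : ℕ) (hn : 1 ≤ n)
    (hdeg : P.natDegree = n) :
    ∀ z : ℂ, 1 ≤ ‖z‖ →
      ‖(Polynomial.derivative P).eval z‖
        ≤ (n : ℝ) * ‖z‖ ^ (n - 1) * maxMod P := by
  intro z hz
  have key : ∀ t : ℝ, t ∈ Set.Ioi (1:ℝ) →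
      ‖(Polynomial.derivative P).eval ((t:ℂ) * z)‖
        ≤ (n : ℝ) * (t * ‖z‖) ^ (n - 1) * maxMod P := by
    intro t ht
    have ht1 : 1 < t := ht
    have habs : ‖(t:ℂ) * z‖ = t * ‖z‖ := by
      rw [norm_mul, Complex.norm_real, Real.norm_eq_abs, abs_of_pos (by linarith)]
    have h1 : 1 < ‖(t:ℂ) * z‖ := by
      rw [habs]; nlinarith
    have := main_strict P n hn hdeg ((t:ℂ) * z) h1
    rwa [habs] at this
  have h1 : Tendsto (fun t : ℝ => ‖(Polynomial.derivative P).eval ((t:ℂ) * z)‖)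
      (nhdsWithin 1 (Set.Ioi 1))
      (nhds (‖(Polynomial.derivative P).eval z‖)) := by
    have hc : Continuous fun t : ℝ => ‖(Polynomial.derivative P).eval ((t:ℂ) * z)‖ :=
      continuous_norm.comp
        ((Polynomial.derivative P).continuous.comp (Complex.continuous_ofReal.mul continuous_const))
    have := hc.tendsto 1
    simp only [Complex.ofReal_one, one_mul] at this
    exact this.mono_left nhdsWithin_le_nhds
  have h2 : Tendsto (fun t : ℝ => (n : ℝ) * (t * ‖z‖) ^ (n - 1) * maxMod P)
      (nhdsWithin 1 (Set.Ioi 1))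
      (nhds ((n : ℝ) * ‖z‖ ^ (n - 1) * maxMod P)) := by
    have hc : Continuous fun t : ℝ => (n : ℝ) * (t * ‖z‖) ^ (n - 1) * maxMod P := by
      continuity
    have := hc.tendsto 1
    simp only [one_mul] at this
    exact this.mono_left nhdsWithin_le_nhds
  exact le_of_tendsto_of_tendsto h1 h2 (eventually_mem_nhdsWithin.mono key)
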